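/- Let A be a unital C*-algebra with a state φ, let r ≥ 2, p ≠ q in [r], let v ∈ A be unitary and w ∈ A. In M_r(A) set θ = v⊗e(p,q) and χ = w⊗e(q,q). Then: (1) θ is a partial isometry with θθ* = 1⊗e(p,p) and θ*θ = 1⊗e(q,q); (2) Φ_q(χ^k) = φ(w^k) for all k ≥ 1; in particular, if w is positive with the quarter-circular distribution with respect to φ, then χ is positive and has the quarter-circular distribution with respect to Φ_q; (3) θ and χ are *-monotone independent with respect to Φ_q in the following sense: for every n ≥ 2, all a₁,…,a_n in the linear span of {v⊗e(p,q), v*⊗e(q,p), 1⊗e(q,q), 1⊗e(p,p)} and all b₁,…,b_{n−1} each of the form P(w)⊗e(q,q) with P a polynomial, one has Φ_q(a₁b₁a₂b₂⋯b_{n−1}a_n) = Φ_q(a₁)·Φ_q(a₂)⋯Φ_q(a_n)·Φ_q(b₁b₂⋯b_{n−1}). -/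

import Mathlib

open scoped ComplexOrder

noncomputable section

/-- The `k`-th moment of the quarter-circular distribution:
`(1/π)·∫₀² t^k √(4−t²) dt`. -/
def qcMoment (k : ℕ) : ℝ :=
  (1 / Real.pi) * ∫ t in (0:ℝ)..2, t ^ k * Real.sqrt (4 - t ^ 2)

section Aux

variable {A : Type*} [Ring A] {r : ℕ}

lemma star_stdBasisMatrix [StarRing A] (p q : Fin r) (a : A) :
    star (Matrix.single p q a) = Matrix.single q p (star a) := by
  ext i j
  simp [Matrix.star_apply, Matrix.single, Matrix.of_apply, and_comm]
  aesop

lemma key_entry (q : Fin r) (M X : Matrix (Fin r) (Fin r) A) (c : A) :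
    (M * Matrix.single q q c * X) q q = M q q * c * X q q := by
  simp [Matrix.mul_apply, Matrix.single, Finset.mul_sum, Finset.sum_mul, ite_and]

lemma pow_stdBasisMatrix (q : Fin r) (w : A) :
    ∀ k : ℕ, 1 ≤ k →
      (Matrix.single q q w) ^ k = Matrix.single q q (w ^ k)
  | 1, _ => by simp
  | (k+2), _ => by
      rw [pow_succ, pow_stdBasisMatrix q w (k+1) (by omega),
        Matrix.single_mul_single_same, ← pow_succ]

lemma prod_stdBasisMatrix (q : Fin r) :
    ∀ (m : ℕ) (c : Fin (m+1) → A),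
      (List.ofFn fun i : Fin (m+1) => Matrix.single q q (c i)).prod
        = Matrix.single q q (List.ofFn c).prod
  | 0, c => by simp
  | (m+1), c => by
      rw [List.ofFn_succ, List.prod_cons,
        prod_stdBasisMatrix q m (fun i => c i.succ),
        Matrix.single_mul_single_same]
      conv_rhs => rw [List.ofFn_succ, List.prod_cons]

lemma main_entry [Algebra ℂ A] (q : Fin r) :
    ∀ (m : ℕ) (a : Fin (m+1) → Matrix (Fin r) (Fin r) A) (c : Fin m → A)
      (d : Fin (m+1) → ℂ), (∀ i, a i q q = d i • (1 : A)) →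
    ((List.ofFn fun i : Fin m =>
        a i.castSucc * Matrix.single q q (c i)).prod * a (Fin.last m)) q q
      = (∏ i, d i) • (List.ofFn c).prod
  | 0, a, c, d, h => by simpa using h 0
  | (m+1), a, c, d, h => by
      rw [List.ofFn_succ, List.prod_cons, mul_assoc]
      simp only [Fin.castSucc_zero]
      rw [mul_assoc, ← mul_assoc (a 0), key_entry]
      have hrest := main_entry q m (fun i => a i.succ) (fun i => c i.succ)
        (fun i => d i.succ) (fun i => h i.succ)
      simp only [Fin.succ_last] at hrest
      have harg : (List.ofFn fun i : Fin m =>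
          a (i.succ).castSucc * Matrix.single q q (c i.succ))
          = (List.ofFn fun i : Fin m =>
          a (i.castSucc).succ * Matrix.single q q (c i.succ)) := by
        simp [Fin.succ_castSucc, -Fin.castSucc_succ]
      rw [harg, hrest, h 0]
      conv_rhs => rw [List.ofFn_succ, List.prod_cons, Fin.prod_univ_succ, Fin.prod_univ_succ]
      simp only [smul_mul_assoc, mul_smul_comm, one_mul, smul_smul]
      congr 1
      rw [Fin.prod_univ_succ]
      ring

lemma entry_scalar [Algebra ℂ A] [StarRing A] (p q : Fin r) (hpq : p ≠ q) (v : A)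
    (a : Matrix (Fin r) (Fin r) A)
    (ha : a ∈ Submodule.span ℂ
      ({Matrix.single p q v, Matrix.single q p (star v),
        Matrix.single q q (1 : A), Matrix.single p p (1 : A)} :
        Set (Matrix (Fin r) (Fin r) A))) :
    ∃ c : ℂ, a q q = c • (1 : A) := by
  refine Submodule.span_induction ?_ ⟨0, by simp⟩
    (fun x y _ _ ⟨cx, hx⟩ ⟨cy, hy⟩ => ⟨cx + cy, by simp [Matrix.add_apply, hx, hy, add_smul]⟩)
    (fun t x _ ⟨cx, hx⟩ => ⟨t * cx, by simp [Matrix.smul_apply, hx, mul_smul]⟩) ha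
  rintro x hx
  simp only [Set.mem_insert_iff, Set.mem_singleton_iff] at hx
  rcases hx with rfl | rfl | rfl | rfl
  · exact ⟨0, by simp [hpq]⟩
  · exact ⟨0, by simp [hpq]⟩
  · exact ⟨1, by simp⟩
  · exact ⟨0, by simp [hpq]⟩

end Aux

/-- for a unitary `v` and `w ∈ A`, with `θ = v⊗e(p,q)`, `χ = w⊗e(q,q)` in
`M_r(A)`: (1) `θ` is a partial isometry with `θθ* = 1⊗e(p,p)`, `θ*θ = 1⊗e(q,q)`;
(2) `Φ_q(χ^k) = φ(w^k)`, and if `w` is positive quarter-circular then so is `χ` w.r.t. `Φ_q`;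
(3) `θ` and `χ` are *-monotone independent with respect to `Φ_q`. -/
theorem partialIsometry_quarterCircular_monotone
    (A : Type*) [NormedRing A] [StarRing A] [CStarRing A] [NormedAlgebra ℂ A]
    [CompleteSpace A] [StarModule ℂ A]
    (φ : A →ₗ[ℂ] ℂ) (hφ1 : φ 1 = 1) (hφpos : ∀ a : A, 0 ≤ φ (star a * a))
    (r : ℕ) (hr : 2 ≤ r) (p q : Fin r) (hpq : p ≠ q)
    (v w : A) (hv : star v * v = 1 ∧ v * star v = 1) :
    -- (1) partial isometry
    ((Matrix.single p q v) * star (Matrix.single p q v)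
        = Matrix.single p p (1 : A) ∧
      star (Matrix.single p q v) * (Matrix.single p q v)
        = Matrix.single q q (1 : A)) ∧
    -- (2) moments of χ
    ((∀ k : ℕ, 1 ≤ k →
        φ (((Matrix.single q q w) ^ k) q q) = φ (w ^ k)) ∧
      ((∃ y : A, w = star y * y) → (∀ k : ℕ, φ (w ^ k) = (qcMoment k : ℂ)) →
        (∃ Y : Matrix (Fin r) (Fin r) A, Matrix.single q q w = star Y * Y) ∧
        (∀ k : ℕ, 1 ≤ k →
          φ (((Matrix.single q q w) ^ k) q q) = (qcMoment k : ℂ)))) ∧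
    -- (3) *-monotone independence of θ and χ
    (∀ (m : ℕ), 1 ≤ m →
      ∀ (a : Fin (m + 1) → Matrix (Fin r) (Fin r) A)
        (b : Fin m → Matrix (Fin r) (Fin r) A),
      (∀ i, a i ∈ Submodule.span ℂ
        ({Matrix.single p q v, Matrix.single q p (star v),
          Matrix.single q q (1 : A), Matrix.single p p (1 : A)} :
          Set (Matrix (Fin r) (Fin r) A))) →
      (∀ i, ∃ P : Polynomial ℂ, b i = Matrix.single q q (Polynomial.aeval w P)) →
      φ ((((List.ofFn fun i : Fin m => a i.castSucc * b i).prod) * a (Fin.last m)) q q)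
        = (∏ i, φ ((a i) q q)) * φ (((List.ofFn fun i => b i).prod) q q)) := by
  have hmom : ∀ k : ℕ, 1 ≤ k →
      φ (((Matrix.single q q w) ^ k) q q) = φ (w ^ k) := by
    intro k hk
    rw [pow_stdBasisMatrix q w k hk, Matrix.single_apply_same]
  refine ⟨⟨?_, ?_⟩, ⟨hmom, ?_⟩, ?_⟩
  · rw [star_stdBasisMatrix, Matrix.single_mul_single_same, hv.2]
  · rw [star_stdBasisMatrix, Matrix.single_mul_single_same, hv.1]
  · rintro ⟨y, rfl⟩ hqc
    refine ⟨⟨Matrix.single q q y, ?_⟩, fun k hk => (hmom k hk).trans (hqc k)⟩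
    rw [star_stdBasisMatrix, Matrix.single_mul_single_same]
  · intro m hm a b ha hb
    choose P hP using hb
    set c : Fin m → A := fun i => Polynomial.aeval w (P i) with hc
    choose d hd using fun i => entry_scalar p q hpq v (a i) (ha i)
    have hbfn : (fun i : Fin m => b i) = fun i => Matrix.single q q (c i) := by
      ext i : 1; rw [hP i]
    have habfn : (fun i : Fin m => a i.castSucc * b i)
        = fun i => a i.castSucc * Matrix.single q q (c i) := by
      ext i : 1; rw [hP i]
    rw [habfn, main_entry q m a c d hd, map_smul]
    have hprod : (∏ i, φ ((a i) q q)) = ∏ i, d i := by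
      refine Finset.prod_congr rfl fun i _ => ?_
      rw [hd i, map_smul, hφ1, smul_eq_mul, mul_one]
    obtain ⟨m', rfl⟩ : ∃ m', m = m' + 1 := ⟨m - 1, by omega⟩
    rw [hbfn, prod_stdBasisMatrix, Matrix.single_apply_same, hprod, smul_eq_mul]

end
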